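/- (Hurwitz) Let (t₁,t₂,t₃) be a triality on (V₁,q₁), (V₂,q₂), (V₃,q₃). Then the common dimension of the three spaces lies in {1, 2, 4, 8}; in particular dim V₁ ∈ {1, 2, 4, 8}. -/

import Mathlib

open QuadraticMap Module

universe u

section helpers
variable {U W X : Type*} [AddCommGroup U] [Module ℂ U] [AddCommGroup W] [Module ℂ W]
  [AddCommGroup X] [Module ℂ X]

lemma comp_polar_left (qU : QuadraticForm ℂ U) (qW : QuadraticForm ℂ W) (qX : QuadraticForm ℂ X)
    (f : U →ₗ[ℂ] W →ₗ[ℂ] X) (h : ∀ u w, qX (f u w) = qU u * qW w) (u u' : U) (w : W) :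
    polar qX (f u w) (f u' w) = polar qU u u' * qW w := by
  have : f u w + f u' w = f (u + u') w := by rw [map_add, LinearMap.add_apply]
  simp only [QuadraticMap.polar, this, h]
  ring

lemma comp_polar_two (qU : QuadraticForm ℂ U) (qW : QuadraticForm ℂ W) (qX : QuadraticForm ℂ X)
    (f : U →ₗ[ℂ] W →ₗ[ℂ] X) (h : ∀ u w, qX (f u w) = qU u * qW w) (u u' : U) (w w' : W) :
    polar qX (f u w) (f u' w') + polar qX (f u w') (f u' w)
      = polar qU u u' * polar qW w w' := by
  have h1 := comp_polar_left qU qW qX f h u u' (w + w')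
  have h2 := comp_polar_left qU qW qX f h u u' w
  have h3 := comp_polar_left qU qW qX f h u u' w'
  rw [map_add (f u), map_add (f u'), polar_add_left, polar_add_right, polar_add_right] at h1
  have hq : qW (w + w') = polar qW w w' + qW w + qW w' := by
    simp only [QuadraticMap.polar]; ring
  rw [hq] at h1
  linear_combination h1 - h2 - h3

lemma exists_q_eq_one {V : Type*} [AddCommGroup V] [Module ℂ V] [Nontrivial V]
    (q : QuadraticForm ℂ V) (hn : ∀ x : V, (∀ y : V, polar q x y = 0) → x = 0) :
    ∃ e, q e = 1 := by
  have hne : ∃ v, q v ≠ 0 := by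
    by_contra h
    push_neg at h
    obtain ⟨x, hx⟩ := exists_ne (0 : V)
    exact hx (hn x fun y => by simp [QuadraticMap.polar, h])
  obtain ⟨v, hv⟩ := hne
  obtain ⟨c, hc⟩ := IsAlgClosed.exists_pow_nat_eq ((q v)⁻¹) zero_lt_two
  refine ⟨c • v, ?_⟩
  rw [QuadraticMap.map_smul, smul_eq_mul]
  have : c * c = (q v)⁻¹ := by rw [← hc]; ring
  rw [this, inv_mul_cancel₀ hv]

lemma inj_slice (qU : QuadraticForm ℂ U) (qW : QuadraticForm ℂ W) (qX : QuadraticForm ℂ X)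
    (hnU : ∀ x : U, (∀ y : U, polar qU x y = 0) → x = 0)
    (f : U →ₗ[ℂ] W →ₗ[ℂ] X) (h : ∀ u w, qX (f u w) = qU u * qW w)
    (w : W) (hw : qW w ≠ 0) : Function.Injective (f.flip w) := by
  rw [← LinearMap.ker_eq_bot, LinearMap.ker_eq_bot']
  intro u hu
  apply hnU
  intro u'
  have := comp_polar_left qU qW qX f h u u' w
  rw [show f u w = 0 from hu] at this
  rw [polar_zero_left] at this
  exact (mul_eq_zero.mp this.symm).resolve_right hw

end helpers


lemma anticomm_bound : ∀ (n : ℕ), 0 < n → ∀ (W : Type u) [AddCommGroup W] [Module ℂ W]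
    [FiniteDimensional ℂ W], Module.finrank ℂ W = n →
    ∀ (m : ℕ) (B : Fin m → (W →ₗ[ℂ] W)),
    (∀ i x, B i (B i x) = -x) →
    (∀ (i j : Fin m) (x : W), i ≠ j → B i (B j x) = -(B j (B i x))) →
    ∃ a : ℕ, m ≤ 2 * a + 1 ∧ 2 ^ a ∣ n := by
  intro n
  induction n using Nat.strong_induction_on with
  | _ n IH =>
  intro hn W _ _ _ hW m B hsq hanti
  by_cases hm : m ≤ 1
  · exact ⟨0, by omega, one_dvd _⟩
  push_neg at hm
  have h0 : (0 : ℕ) < m := by omega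
  set i0 : Fin m := ⟨0, h0⟩ with hi0
  set i1 : Fin m := ⟨1, hm⟩ with hi1
  set B0 := B i0 with hB0
  set B1 := B i1 with hB1
  set p : Submodule ℂ W := LinearMap.ker (B0 - Complex.I • LinearMap.id) with hp
  set q : Submodule ℂ W := LinearMap.ker (B0 + Complex.I • LinearMap.id) with hq
  have hp_mem : ∀ x : W, x ∈ p ↔ B0 x = Complex.I • x := by
    intro x
    simp [hp, LinearMap.mem_ker, sub_eq_zero, LinearMap.sub_apply, LinearMap.smul_apply]
  have hq_mem : ∀ x : W, x ∈ q ↔ B0 x = -(Complex.I • x) := by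
    intro x
    simp [hq, LinearMap.mem_ker, add_eq_zero_iff_eq_neg, LinearMap.add_apply,
      LinearMap.smul_apply]
  have hxp' : ∀ x : W, x - Complex.I • B0 x ∈ p := by
    intro x
    have e1 : B0 (x - Complex.I • B0 x) = Complex.I • x + B0 x := by
      rw [_root_.map_sub, LinearMap.map_smul, hsq i0]; module
    have e2 : Complex.I • (x - Complex.I • B0 x) = Complex.I • x + B0 x := by
      rw [smul_sub, smul_smul, Complex.I_mul_I]; module
    rw [hp_mem, e1, e2]
  have hxq' : ∀ x : W, x + Complex.I • B0 x ∈ q := by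
    intro x
    have e3 : B0 (x + Complex.I • B0 x) = B0 x - Complex.I • x := by
      rw [_root_.map_add, LinearMap.map_smul, hsq i0]; module
    have e4 : -(Complex.I • (x + Complex.I • B0 x)) = B0 x - Complex.I • x := by
      rw [smul_add, smul_smul, Complex.I_mul_I]; module
    rw [hq_mem, e3, e4]
  -- sup = top
  have hsup : p ⊔ q = ⊤ := by
    rw [eq_top_iff]
    rintro x -
    have hmem : ((x - Complex.I • B0 x) + (x + Complex.I • B0 x)) ∈ p ⊔ q :=
      Submodule.add_mem_sup (hxp' x) (hxq' x)
    have hsum : ((x - Complex.I • B0 x) + (x + Complex.I • B0 x)) = (2 : ℂ) • x := by module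
    rw [hsum] at hmem
    have hmem2 := Submodule.smul_mem _ ((2 : ℂ)⁻¹) hmem
    rwa [smul_smul, inv_mul_cancel₀ (by norm_num : (2:ℂ) ≠ 0), one_smul] at hmem2
  -- inf = bot
  have hinf : p ⊓ q = ⊥ := by
    rw [eq_bot_iff]
    intro x hx
    obtain ⟨hxp, hxq⟩ := Submodule.mem_inf.mp hx
    rw [hp_mem] at hxp
    rw [hq_mem] at hxq
    have h' : Complex.I • x + Complex.I • x = 0 := by
      nth_rewrite 1 [← hxp]
      rw [hxq]
      abel
    rw [← two_smul ℂ, smul_smul, smul_eq_zero] at h'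
    rcases h' with h' | h'
    · exact absurd h' (by simp [Complex.I_ne_zero])
    · simp [h']
  have h01 : i0 ≠ i1 := by rw [hi0, hi1]; simp [Fin.ext_iff]
  have hsq0' : ∀ z, B0 (B0 z) = -z := hsq i0
  have hsq1' : ∀ z, B1 (B1 z) = -z := hsq i1
  have hac01' : ∀ z, B0 (B1 z) = -(B1 (B0 z)) := fun z => hanti i0 i1 z h01
  -- B1 is injective
  have hB1inj : Function.Injective B1 := by
    intro a b hab
    have ha := hsq1' a
    rw [hab, hsq1' b] at ha
    exact neg_injective ha.symm
  -- B1 exchanges p and q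
  have hpq : ∀ x ∈ p, B1 x ∈ q := by
    intro x hx
    rw [hp_mem] at hx
    rw [hq_mem, hac01' x, hx, LinearMap.map_smul]
  have hqp : ∀ x ∈ q, B1 x ∈ p := by
    intro x hx
    rw [hq_mem] at hx
    rw [hp_mem, hac01' x, hx, LinearMap.map_neg, LinearMap.map_smul, neg_neg]
  have hrinj : ∀ (r s : Submodule ℂ W) (hf : ∀ x ∈ r, B1 x ∈ s),
      Function.Injective (B1.restrict hf) := by
    intro r s hf a b hab
    have : B1 (a : W) = B1 (b : W) := by
      have := congrArg (Subtype.val) hab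
      simpa [LinearMap.restrict_apply] using this
    exact Subtype.ext (hB1inj this)
  have hle1 : finrank ℂ p ≤ finrank ℂ q :=
    LinearMap.finrank_le_finrank_of_injective (hrinj p q hpq)
  have hle2 : finrank ℂ q ≤ finrank ℂ p :=
    LinearMap.finrank_le_finrank_of_injective (hrinj q p hqp)
  have hsum := Submodule.finrank_sup_add_finrank_inf_eq p q
  rw [hsup, hinf, finrank_top, finrank_bot] at hsum
  set d := finrank ℂ p with hdd
  have hnd : n = 2 * d := by omega
  have hdpos : 0 < d := by omega
  -- the restricted operators
  have hj' : ∀ j : Fin (m - 2), (j : ℕ) + 2 < m := fun j => by omega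
  have hCmem : ∀ (j : Fin (m - 2)), ∀ x ∈ p, B1 (B ⟨(j : ℕ) + 2, hj' j⟩ x) ∈ p := by
    intro j x hx
    set jj : Fin m := ⟨(j : ℕ) + 2, hj' j⟩ with hjj
    have h0j : i0 ≠ jj := by rw [hi0, hjj]; simp [Fin.ext_iff]
    have hac0j : ∀ z, B0 (B jj z) = -(B jj (B0 z)) := fun z => hanti i0 jj z h0j
    rw [hp_mem] at hx ⊢
    rw [hac01' _, hac0j x, hx, LinearMap.map_smul, LinearMap.map_neg, neg_neg,
      LinearMap.map_smul]
  set C : Fin (m - 2) → (p →ₗ[ℂ] p) :=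
    fun j => (B1 ∘ₗ B ⟨(j : ℕ) + 2, hj' j⟩).restrict
      (fun x hx => by simpa using hCmem j x hx) with hC
  have hCapp : ∀ (j : Fin (m - 2)) (x : p),
      ((C j x : W)) = B1 (B ⟨(j : ℕ) + 2, hj' j⟩ (x : W)) := by
    intro j x
    simp [hC, LinearMap.restrict_apply]
  have hCsq : ∀ (j : Fin (m - 2)) (x : p), C j (C j x) = -x := by
    intro j x
    apply Subtype.ext
    set jj : Fin m := ⟨(j : ℕ) + 2, hj' j⟩ with hjj
    have hj1 : jj ≠ i1 := by rw [hi1, hjj]; simp [Fin.ext_iff]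
    have rj1 : ∀ z, B jj (B1 z) = -(B1 (B jj z)) := fun z => hanti jj i1 z hj1
    have hsqj' : ∀ z, B jj (B jj z) = -z := hsq jj
    simp only [hCapp, ← hjj, Submodule.coe_neg, rj1, hsqj', hsq1', _root_.map_neg, neg_neg]
  have hCanti : ∀ (j k : Fin (m - 2)) (x : p), j ≠ k → C j (C k x) = -(C k (C j x)) := by
    intro j k x hjk
    apply Subtype.ext
    set jj : Fin m := ⟨(j : ℕ) + 2, hj' j⟩ with hjj
    set kk : Fin m := ⟨(k : ℕ) + 2, hj' k⟩ with hkk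
    have hjk' : jj ≠ kk := by
      rw [hjj, hkk]
      simp only [Fin.ext_iff, ne_eq]
      have := Fin.val_ne_of_ne hjk
      omega
    have hj1 : jj ≠ i1 := by rw [hi1, hjj]; simp [Fin.ext_iff]
    have hk1 : kk ≠ i1 := by rw [hi1, hkk]; simp [Fin.ext_iff]
    have rj1 : ∀ z, B jj (B1 z) = -(B1 (B jj z)) := fun z => hanti jj i1 z hj1
    have rk1 : ∀ z, B kk (B1 z) = -(B1 (B kk z)) := fun z => hanti kk i1 z hk1
    have rjk : ∀ z, B jj (B kk z) = -(B kk (B jj z)) := fun z => hanti jj kk z hjk'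
    simp only [hCapp, ← hjj, ← hkk, Submodule.coe_neg, rj1, rk1, rjk, hsq1', _root_.map_neg, neg_neg]
  obtain ⟨a, ha1, ha2⟩ := IH d (by omega) hdpos p rfl (m - 2) C hCsq hCanti
  exact ⟨a + 1, by omega, by rw [pow_succ, hnd, mul_comm (2 ^ a) 2]; exact Nat.mul_dvd_mul_left 2 ha2⟩


lemma two_pow_big : ∀ a : ℕ, 4 ≤ a → 2 * a + 2 < 2 ^ a := by
  intro a h
  induction a with
  | zero => omega
  | succ k ih =>
    rcases Nat.lt_or_ge k 4 with hk | hk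
    · have hk3 : k = 3 := by omega
      subst hk3
      norm_num
    · have := ih (by omega)
      rw [pow_succ]
      omega

/-- Hurwitz's theorem: the common dimension of the three spaces of a triality over ℂ
is 1, 2, 4 or 8. -/
theorem triality_hurwitz
    {V₁ V₂ V₃ : Type*}
    [AddCommGroup V₁] [Module ℂ V₁] [FiniteDimensional ℂ V₁] [Nontrivial V₁]
    [AddCommGroup V₂] [Module ℂ V₂] [FiniteDimensional ℂ V₂] [Nontrivial V₂]
    [AddCommGroup V₃] [Module ℂ V₃] [FiniteDimensional ℂ V₃] [Nontrivial V₃]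
    (q₁ : QuadraticForm ℂ V₁) (q₂ : QuadraticForm ℂ V₂) (q₃ : QuadraticForm ℂ V₃)
    (hn₁ : ∀ x : V₁, (∀ y : V₁, polar q₁ x y = 0) → x = 0)
    (hn₂ : ∀ x : V₂, (∀ y : V₂, polar q₂ x y = 0) → x = 0)
    (hn₃ : ∀ x : V₃, (∀ y : V₃, polar q₃ x y = 0) → x = 0)
    (t₁ : V₂ →ₗ[ℂ] V₃ →ₗ[ℂ] V₁)
    (t₂ : V₁ →ₗ[ℂ] V₃ →ₗ[ℂ] V₂)
    (t₃ : V₁ →ₗ[ℂ] V₂ →ₗ[ℂ] V₃)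
    (hT₁₂ : ∀ (v₁ : V₁) (v₂ : V₂) (v₃ : V₃),
      polar q₁ (t₁ v₂ v₃) v₁ = polar q₂ (t₂ v₁ v₃) v₂)
    (hT₂₃ : ∀ (v₁ : V₁) (v₂ : V₂) (v₃ : V₃),
      polar q₂ (t₂ v₁ v₃) v₂ = polar q₃ (t₃ v₁ v₂) v₃)
    (ho₁ : ∀ (v₂ : V₂) (v₃ : V₃), q₁ (t₁ v₂ v₃) = q₂ v₂ * q₃ v₃)
    (ho₂ : ∀ (v₁ : V₁) (v₃ : V₃), q₂ (t₂ v₁ v₃) = q₁ v₁ * q₃ v₃)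
    (ho₃ : ∀ (v₁ : V₁) (v₂ : V₂), q₃ (t₃ v₁ v₂) = q₁ v₁ * q₂ v₂) :
    Module.finrank ℂ V₁ = Module.finrank ℂ V₂ ∧
    Module.finrank ℂ V₂ = Module.finrank ℂ V₃ ∧
    Module.finrank ℂ V₁ ∈ ({1, 2, 4, 8} : Set ℕ) := by
  classical
  obtain ⟨e₂, he₂⟩ := exists_q_eq_one q₂ hn₂
  obtain ⟨e₃, he₃⟩ := exists_q_eq_one q₃ hn₃
  have ho₁' : ∀ (w : V₃) (u : V₂), q₁ (t₁.flip w u) = q₃ w * q₂ u := by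
    intro w u; rw [LinearMap.flip_apply, ho₁, mul_comm]
  -- dimension comparisons
  have h21 : finrank ℂ V₂ ≤ finrank ℂ V₁ :=
    LinearMap.finrank_le_finrank_of_injective
      (inj_slice q₂ q₃ q₁ hn₂ t₁ ho₁ e₃ (by rw [he₃]; exact one_ne_zero))
  have h12 : finrank ℂ V₁ ≤ finrank ℂ V₂ :=
    LinearMap.finrank_le_finrank_of_injective
      (inj_slice q₁ q₃ q₂ hn₁ t₂ ho₂ e₃ (by rw [he₃]; exact one_ne_zero))
  have h31 : finrank ℂ V₃ ≤ finrank ℂ V₁ :=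
    LinearMap.finrank_le_finrank_of_injective
      (inj_slice q₃ q₂ q₁ hn₃ t₁.flip ho₁' e₂ (by rw [he₂]; exact one_ne_zero))
  have h13 : finrank ℂ V₁ ≤ finrank ℂ V₃ :=
    LinearMap.finrank_le_finrank_of_injective
      (inj_slice q₁ q₂ q₃ hn₁ t₃ ho₃ e₂ (by rw [he₂]; exact one_ne_zero))
  have h12eq : finrank ℂ V₁ = finrank ℂ V₂ := le_antisymm h12 h21
  have h13eq : finrank ℂ V₁ = finrank ℂ V₃ := le_antisymm h13 h31
  refine ⟨h12eq, by rw [← h12eq, h13eq], ?_⟩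
  -- orthonormal family in V₂
  haveI : Invertible (2 : ℂ) := invertibleOfNonzero two_ne_zero
  have hsymm : (polarBilin q₂).IsSymm := by
    rw [LinearMap.isSymm_def]
    intro x y
    simp only [RingHom.id_apply, polarBilin_apply_apply]
    exact polar_comm _ x y
  set n := finrank ℂ V₂ with hndef
  have npos : 0 < n := finrank_pos
  obtain ⟨v, hv⟩ := LinearMap.BilinForm.exists_orthogonal_basis hsymm
  have hvne : ∀ i, q₂ (v i) ≠ 0 := by
    intro i hqv
    have hz : (polarBilin q₂) (v i) = 0 := by
      apply v.ext
      intro j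
      by_cases hij : i = j
      · subst hij
        simp [polarBilin_apply_apply, polar_self, hqv]
      · have h0 : polarBilin q₂ (v i) (v j) = 0 := hv hij
        simpa using h0
    have hzero : ∀ y, polar q₂ (v i) y = 0 := by
      intro y
      have h' := congrArg (fun f => f y) hz
      simpa [polarBilin_apply_apply] using h'
    exact v.ne_zero i (hn₂ (v i) hzero)
  choose c hc using fun i => IsAlgClosed.exists_pow_nat_eq ((q₂ (v i))⁻¹) zero_lt_two
  set w : Fin n → V₂ := fun i => c i • v i with hwdef
  have hw1 : ∀ i, q₂ (w i) = 1 := by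
    intro i
    show q₂ (c i • v i) = 1
    rw [QuadraticMap.map_smul, smul_eq_mul]
    have hcc : c i * c i = (q₂ (v i))⁻¹ := by rw [← hc i]; ring
    rw [hcc, inv_mul_cancel₀ (hvne i)]
  have hworth : ∀ i j, i ≠ j → polar q₂ (w i) (w j) = 0 := by
    intro i j hij
    show polar q₂ (c i • v i) (c j • v j) = 0
    have hvij : polar q₂ (v i) (v j) = 0 := hv hij
    rw [polar_smul_left, polar_smul_right, hvij, smul_eq_mul, smul_eq_mul, mul_zero, mul_zero]
  -- the key polar identities
  have R1 : ∀ i (y y' : V₃), polar q₁ (t₁ (w i) y) (t₁ (w i) y') = polar q₃ y y' := by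
    intro i y y'
    have h2 := comp_polar_two q₂ q₃ q₁ t₁ ho₁ (w i) (w i) y y'
    rw [polar_self, hw1 i] at h2
    rw [polar_comm _ (t₁ (w i) y') (t₁ (w i) y), ← two_mul] at h2
    have h3 : (2 • (1:ℂ)) * polar q₃ y y' = 2 * polar q₃ y y' := by norm_num
    rw [h3] at h2
    exact mul_left_cancel₀ two_ne_zero h2
  have R2 : ∀ i j, i ≠ j → ∀ (y y' : V₃),
      polar q₁ (t₁ (w i) y) (t₁ (w j) y') = -(polar q₁ (t₁ (w i) y') (t₁ (w j) y)) := by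
    intro i j hij y y'
    have h2 := comp_polar_two q₂ q₃ q₁ t₁ ho₁ (w i) (w j) y y'
    rw [hworth i j hij, zero_mul] at h2
    exact eq_neg_of_add_eq_zero_left h2
  -- the pivot equivalence
  set iN : Fin n := ⟨n - 1, by omega⟩ with hiN
  have hLinj : Function.Injective (t₁ (w iN)) := by
    rw [← LinearMap.ker_eq_bot, LinearMap.ker_eq_bot']
    intro y hy
    apply hn₃
    intro y'
    have hr := R1 iN y y'
    rw [hy, polar_zero_left] at hr
    exact hr.symm
  have hLbij : Function.Bijective (t₁ (w iN)) :=
    ⟨hLinj, (LinearMap.injective_iff_surjective_of_finrank_eq_finrank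
      (by rw [← h13eq, h12eq])).mp hLinj⟩
  set E := LinearEquiv.ofBijective (t₁ (w iN)) hLbij with hE
  set N : V₁ →ₗ[ℂ] V₃ := E.symm.toLinearMap with hN
  have hLN : ∀ x : V₁, t₁ (w iN) (N x) = x := fun x => E.apply_symm_apply x
  have hNL : ∀ y : V₃, N (t₁ (w iN) y) = y := fun y => E.symm_apply_apply y
  have hNpolar : ∀ (u : V₁) (z : V₃), polar q₃ (N u) z = polar q₁ u (t₁ (w iN) z) := by
    intro u z
    have hr := R1 iN (N u) z
    rw [hLN] at hr
    exact hr.symm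
  have hstar : ∀ (i : Fin n), i ≠ iN → ∀ (y : V₃) (z : V₁),
      polar q₁ (t₁ (w i) (N z)) (t₁ (w iN) y) = -(polar q₁ (t₁ (w i) y) z) := by
    intro i hi y z
    have h := R2 i iN hi y (N z)
    rw [hLN] at h
    rw [h, neg_neg]
  -- the anticommuting operators
  have hlt : ∀ i : Fin (n - 1), (i : ℕ) < n := fun i => by omega
  set Bop : Fin (n - 1) → (V₃ →ₗ[ℂ] V₃) :=
    fun i => N ∘ₗ (t₁ (w ⟨(i : ℕ), hlt i⟩)) with hBop
  have hne : ∀ i : Fin (n - 1), (⟨(i : ℕ), hlt i⟩ : Fin n) ≠ iN := by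
    intro i
    rw [hiN]
    simp only [Fin.ext_iff, ne_eq]
    omega
  have happ : ∀ (i : Fin (n - 1)) (x : V₃),
      Bop i x = N (t₁ (w ⟨(i : ℕ), hlt i⟩) x) := by
    intro i x
    simp [hBop, LinearMap.comp_apply]
  have Gsq : ∀ (i : Fin (n - 1)) (x : V₃), Bop i (Bop i x) = -x := by
    intro i x
    set i' : Fin n := ⟨(i : ℕ), hlt i⟩ with hi'
    have key : ∀ z, polar q₃ (N (t₁ (w i') (N (t₁ (w i') x))) + x) z = 0 := by
      intro z
      rw [polar_add_left, hNpolar, hstar i' (hne i) z (t₁ (w i') x), R1 i',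
        polar_comm _ z x, neg_add_cancel]
    have h0 := hn₃ _ key
    rw [happ, happ]
    exact eq_neg_of_add_eq_zero_left h0
  have Ganti : ∀ (i j : Fin (n - 1)) (x : V₃), i ≠ j → Bop i (Bop j x) = -(Bop j (Bop i x)) := by
    intro i j x hij
    set i' : Fin n := ⟨(i : ℕ), hlt i⟩ with hi'
    set j' : Fin n := ⟨(j : ℕ), hlt j⟩ with hj'
    have hij' : i' ≠ j' := by
      rw [hi', hj']
      simp only [Fin.ext_iff, ne_eq]
      exact fun h => hij (Fin.ext h)
    have key : ∀ z, polar q₃ (N (t₁ (w i') (N (t₁ (w j') x)))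
        + N (t₁ (w j') (N (t₁ (w i') x)))) z = 0 := by
      intro z
      rw [polar_add_left, hNpolar, hNpolar, hstar i' (hne i) z (t₁ (w j') x),
        hstar j' (hne j) z (t₁ (w i') x), R2 i' j' hij' z x, neg_neg,
        polar_comm _ (t₁ (w j') z) (t₁ (w i') x), add_neg_cancel]
    have h0 := hn₃ _ key
    rw [happ, happ, happ, happ]
    exact eq_neg_of_add_eq_zero_left h0
  -- apply the bound
  have hfr3 : 0 < finrank ℂ V₃ := finrank_pos
  obtain ⟨a, ha1, ha2⟩ := anticomm_bound (finrank ℂ V₃) hfr3 V₃ rfl (n - 1) Bop Gsq Ganti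
  have hn3 : finrank ℂ V₃ = n := by omega
  rw [hn3] at ha2
  have hle : 2 ^ a ≤ n := Nat.le_of_dvd npos ha2
  have ha3 : a ≤ 3 := by
    by_contra hgt
    have := two_pow_big a (by omega)
    omega
  have hna : n ≤ 2 * a + 2 := by omega
  have hgoal : n = 1 ∨ n = 2 ∨ n = 4 ∨ n = 8 := by
    interval_cases a <;> norm_num at ha2 <;> omega
  have hv1 : finrank ℂ V₁ = n := by omega
  rw [hv1]
  simp only [Set.mem_insert_iff, Set.mem_singleton_iff]
  exact hgoal
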